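/- If G⃗ is a proper circular arc digraph (i.e., an orientation of a simple graph containing no induced copy of K⃗_{12} or K⃗_{21}), then X_{G⃗}(x,t) has symmetric coefficients: for each j ≥ 0, the coefficient of t^j in X_{G⃗}(x,t) is a symmetric function. -/

import Mathlib

open scoped BigOperators Classical

namespace CQSF

/-- A proper coloring of the (underlying graph of the) digraph with edge set `E`. -/
def Proper {n : ℕ} (E : Finset (Fin n × Fin n)) (κ : Fin n → ℕ) : Prop :=
  ∀ e ∈ E, κ e.1 ≠ κ e.2

/-- The ascent number of a coloring: directed edges `(u,v)` with `κ u < κ v`. -/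
noncomputable def asc {n : ℕ} (E : Finset (Fin n × Fin n)) (κ : Fin n → ℕ) : ℕ :=
  (E.filter fun e => κ e.1 < κ e.2).card

/-- The content (color multiplicities) of a coloring, i.e. the exponent vector of
its monomial `x_{κ(v₁)} ⋯ x_{κ(vₙ)}`. -/
noncomputable def content (n : ℕ) (κ : Fin n → ℕ) : ℕ →₀ ℕ :=
  ∑ v : Fin n, Finsupp.single (κ v) 1

/-- The chromatic quasisymmetric function of a digraph, as a formal power series in
`x_0, x_1, …` with coefficients in `ℚ[t]`:
`X_G(x,t) = Σ_κ t^{asc κ} x_{κ(v₁)} ⋯ x_{κ(vₙ)}` over proper colorings `κ`. -/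
noncomputable def X (n : ℕ) (E : Finset (Fin n × Fin n)) :
    MvPowerSeries ℕ (Polynomial ℚ) :=
  fun d => ∑ᶠ (κ : Fin n → ℕ) (_ : Proper E κ ∧ content n κ = d),
    (Polynomial.X : Polynomial ℚ) ^ asc E κ


/-- Underlying undirected adjacency of a digraph. -/
def UAdj {n : ℕ} (E : Finset (Fin n × Fin n)) (u v : Fin n) : Prop :=
  (u, v) ∈ E ∨ (v, u) ∈ E

/-- An oriented graph: no loops and no bidirected edges. -/
def Oriented {n : ℕ} (E : Finset (Fin n × Fin n)) : Prop :=
  ∀ e ∈ E, (e.2, e.1) ∉ E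

/-- No induced copy of `K⃗₁₂`: no vertex with edges out to two mutually nonadjacent
vertices. -/
def K12Free {n : ℕ} (E : Finset (Fin n × Fin n)) : Prop :=
  ¬ ∃ u v w : Fin n, v ≠ w ∧ (u, v) ∈ E ∧ (u, w) ∈ E ∧ ¬ UAdj E v w

/-- No induced copy of `K⃗₂₁`: no two mutually nonadjacent vertices with edges into a
common vertex. -/
def K21Free {n : ℕ} (E : Finset (Fin n × Fin n)) : Prop :=
  ¬ ∃ u v w : Fin n, v ≠ w ∧ (v, u) ∈ E ∧ (w, u) ∈ E ∧ ¬ UAdj E v w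

/-- A proper circular arc digraph: an oriented graph avoiding induced `K⃗₁₂` and `K⃗₂₁`. -/
def PCADigraph {n : ℕ} (E : Finset (Fin n × Fin n)) : Prop :=
  Oriented E ∧ K12Free E ∧ K21Free E

section Aux

variable {n : ℕ} (E : Finset (Fin n × Fin n)) (i : ℕ) (κ : Fin n → ℕ)

/-- vertex is colored `i` or `i+1` -/
def inB (v : Fin n) : Prop := κ v = i ∨ κ v = i + 1

/-- adjacency within the bichromatic set -/
def Rel (u v : Fin n) : Prop := UAdj E u v ∧ inB i κ u ∧ inB i κ v

/-- the bichromatic component of `v` -/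
noncomputable def comp (v : Fin n) : Finset (Fin n) :=
  Finset.univ.filter fun u => Relation.ReflTransGen (Rel E i κ) v u

/-- whether the component of `v` gets its colors swapped -/
def doSwap (v : Fin n) : Prop :=
  inB i κ v ∧ ((comp E i κ v).filter fun u => κ u = i).card ≠
    ((comp E i κ v).filter fun u => κ u = i + 1).card

/-- the color-swapping map on colorings -/
noncomputable def Phi (v : Fin n) : ℕ :=
  if doSwap E i κ v then (if κ v = i then i + 1 else i) else κ v

def HasIn (u : Fin n) : Prop := ∃ w, (w, u) ∈ E ∧ inB i κ w
def HasOut (u : Fin n) : Prop := ∃ w, (u, w) ∈ E ∧ inB i κ w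

noncomputable def nxt (u : Fin n) : Fin n :=
  if h : HasOut E i κ u then h.choose else u

noncomputable def prv (u : Fin n) : Fin n :=
  if h : HasIn E i κ u then h.choose else u

variable {E i κ}

lemma rel_symm : Symmetric (Rel E i κ) := fun _ _ h => ⟨h.1.symm, h.2.2, h.2.1⟩

lemma reach_symm {u v : Fin n} (h : Relation.ReflTransGen (Rel E i κ) u v) :
    Relation.ReflTransGen (Rel E i κ) v u := by
  induction h with
  | refl => exact .refl
  | tail _ hbc ih => exact Relation.ReflTransGen.head (rel_symm hbc) ih

lemma mem_comp {u v : Fin n} : u ∈ comp E i κ v ↔ Relation.ReflTransGen (Rel E i κ) v u := by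
  simp [comp]

lemma mem_comp_self (v : Fin n) : v ∈ comp E i κ v := mem_comp.2 .refl

lemma comp_eq_of_reach {u v : Fin n} (h : Relation.ReflTransGen (Rel E i κ) u v) :
    comp E i κ u = comp E i κ v := by
  ext w
  simp only [mem_comp]
  exact ⟨fun h' => (reach_symm h).trans h', fun h' => h.trans h'⟩

lemma comp_eq_of_mem {u v : Fin n} (h : u ∈ comp E i κ v) : comp E i κ u = comp E i κ v :=
  (comp_eq_of_reach (mem_comp.1 h)).symm

lemma inB_of_reach {u v : Fin n} (h : Relation.ReflTransGen (Rel E i κ) v u)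
    (hv : inB i κ v) : inB i κ u := by
  induction h with
  | refl => exact hv
  | tail _ h ih => exact h.2.2

lemma inB_of_mem_comp {u v : Fin n} (hu : u ∈ comp E i κ v) (hv : inB i κ v) : inB i κ u :=
  inB_of_reach (mem_comp.1 hu) hv

lemma out_unique (hE : PCADigraph E) (hκ : Proper E κ) {u v w : Fin n}
    (hv : (u, v) ∈ E) (hw : (u, w) ∈ E) (hu : inB i κ u) (hvB : inB i κ v)
    (hwB : inB i κ w) : v = w := by
  by_contra hne
  apply hE.2.1
  refine ⟨u, v, w, hne, hv, hw, ?_⟩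
  intro hadj
  have h1 : κ u ≠ κ v := hκ (u, v) hv
  have h2 : κ u ≠ κ w := hκ (u, w) hw
  have h3 : κ v = κ w := by
    rcases hu with h | h <;> rcases hvB with h' | h' <;> rcases hwB with h'' | h'' <;> omega
  cases hadj with
  | inl h => exact hκ (v, w) h h3
  | inr h => exact hκ (w, v) h h3.symm

lemma in_unique (hE : PCADigraph E) (hκ : Proper E κ) {u v w : Fin n}
    (hv : (v, u) ∈ E) (hw : (w, u) ∈ E) (hu : inB i κ u) (hvB : inB i κ v)
    (hwB : inB i κ w) : v = w := by
  by_contra hne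
  apply hE.2.2
  refine ⟨u, v, w, hne, hv, hw, ?_⟩
  intro hadj
  have h1 : κ v ≠ κ u := hκ (v, u) hv
  have h2 : κ w ≠ κ u := hκ (w, u) hw
  have h3 : κ v = κ w := by
    rcases hu with h | h <;> rcases hvB with h' | h' <;> rcases hwB with h'' | h'' <;> omega
  cases hadj with
  | inl h => exact hκ (v, w) h h3
  | inr h => exact hκ (w, v) h h3.symm

lemma nxt_spec {u : Fin n} (h : HasOut E i κ u) :
    (u, nxt E i κ u) ∈ E ∧ inB i κ (nxt E i κ u) := by
  rw [nxt, dif_pos h]; exact h.choose_spec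

lemma nxt_eq_self {u : Fin n} (h : ¬ HasOut E i κ u) : nxt E i κ u = u := by
  rw [nxt, dif_neg h]

lemma inB_nxt {u : Fin n} (hu : inB i κ u) : inB i κ (nxt E i κ u) := by
  by_cases h : HasOut E i κ u
  · exact (nxt_spec h).2
  · rw [nxt_eq_self h]; exact hu

lemma nxt_eq_of_edge (hE : PCADigraph E) (hκ : Proper E κ) {u v : Fin n}
    (huv : (u, v) ∈ E) (hu : inB i κ u) (hv : inB i κ v) : nxt E i κ u = v := by
  have h : HasOut E i κ u := ⟨v, huv, hv⟩
  exact out_unique hE hκ (nxt_spec h).1 huv hu (nxt_spec h).2 hv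

lemma prv_spec {u : Fin n} (h : HasIn E i κ u) :
    (prv E i κ u, u) ∈ E ∧ inB i κ (prv E i κ u) := by
  rw [prv, dif_pos h]; exact h.choose_spec

lemma prv_eq_self {u : Fin n} (h : ¬ HasIn E i κ u) : prv E i κ u = u := by
  rw [prv, dif_neg h]

lemma inB_prv {u : Fin n} (hu : inB i κ u) : inB i κ (prv E i κ u) := by
  by_cases h : HasIn E i κ u
  · exact (prv_spec h).2
  · rw [prv_eq_self h]; exact hu

lemma prv_eq_of_edge (hE : PCADigraph E) (hκ : Proper E κ) {u v : Fin n}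
    (huv : (v, u) ∈ E) (hu : inB i κ u) (hv : inB i κ v) : prv E i κ u = v := by
  have h : HasIn E i κ u := ⟨v, huv, hv⟩
  exact in_unique hE hκ (prv_spec h).1 huv hu (prv_spec h).2 hv


lemma inB_nxt_iter (hs : inB i κ s) : ∀ k : ℕ, inB i κ ((nxt E i κ)^[k] s) := by
  intro k
  induction k with
  | zero => exact hs
  | succ k ih => rw [Function.iterate_succ_apply']; exact inB_nxt ih

lemma inB_prv_iter (hs : inB i κ s) : ∀ k : ℕ, inB i κ ((prv E i κ)^[k] s) := by
  intro k
  induction k with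
  | zero => exact hs
  | succ k ih => rw [Function.iterate_succ_apply']; exact inB_prv ih


lemma source_unique (hE : PCADigraph E) (hκ : Proper E κ) {s s' : Fin n}
    (hs : inB i κ s) (h1 : ¬ HasIn E i κ s) (h2 : ¬ HasIn E i κ s')
    (hreach : Relation.ReflTransGen (Rel E i κ) s s') : s = s' := by
  have absorb : ∀ k : ℕ, ∀ y : Fin n, (y, (nxt E i κ)^[k] s) ∈ E → inB i κ y →
      ∃ m : ℕ, (nxt E i κ)^[m] s = y := by
    intro k
    induction k with
    | zero =>
      intro y hy hyB
      exact absurd ⟨y, hy, hyB⟩ h1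
    | succ k ih =>
      intro y hy hyB
      have hiter : (nxt E i κ)^[k + 1] s = nxt E i κ ((nxt E i κ)^[k] s) :=
        Function.iterate_succ_apply' _ _ _
      rw [hiter] at hy
      by_cases hp : HasOut E i κ ((nxt E i κ)^[k] s)
      · have hspec := nxt_spec hp
        have hB : inB i κ (nxt E i κ ((nxt E i κ)^[k] s)) := by
          rw [← hiter]; exact inB_nxt_iter hs (k + 1)
        have : y = (nxt E i κ)^[k] s :=
          in_unique hE hκ hy hspec.1 hB hyB (inB_nxt_iter hs k)
        exact ⟨k, this.symm⟩
      · rw [nxt_eq_self hp] at hy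
        exact ih y hy hyB
  have horb : ∀ c : Fin n, Relation.ReflTransGen (Rel E i κ) s c →
      ∃ m : ℕ, (nxt E i κ)^[m] s = c := by
    intro c hc
    induction hc with
    | refl => exact ⟨0, rfl⟩
    | @tail b c hab hbc ih =>
      obtain ⟨k, hk⟩ := ih
      rcases hbc.1 with hbc' | hbc'
      · refine ⟨k + 1, ?_⟩
        rw [Function.iterate_succ_apply', hk]
        exact nxt_eq_of_edge hE hκ hbc' hbc.2.1 hbc.2.2
      · subst hk
        exact absorb k c hbc' hbc.2.2
  obtain ⟨m, hm⟩ := horb s' hreach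
  clear hreach
  induction m with
  | zero => exact hm
  | succ m ih =>
    have hiter : (nxt E i κ)^[m + 1] s = nxt E i κ ((nxt E i κ)^[m] s) :=
      Function.iterate_succ_apply' _ _ _
    rw [hiter] at hm
    by_cases hp : HasOut E i κ ((nxt E i κ)^[m] s)
    · exfalso
      have hspec := nxt_spec hp
      rw [hm] at hspec
      exact h2 ⟨(nxt E i κ)^[m] s, hspec.1, inB_nxt_iter hs m⟩
    · rw [nxt_eq_self hp] at hm
      exact ih hm

lemma sink_unique (hE : PCADigraph E) (hκ : Proper E κ) {s s' : Fin n}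
    (hs : inB i κ s) (h1 : ¬ HasOut E i κ s) (h2 : ¬ HasOut E i κ s')
    (hreach : Relation.ReflTransGen (Rel E i κ) s s') : s = s' := by
  have absorb : ∀ k : ℕ, ∀ y : Fin n, ((prv E i κ)^[k] s, y) ∈ E → inB i κ y →
      ∃ m : ℕ, (prv E i κ)^[m] s = y := by
    intro k
    induction k with
    | zero =>
      intro y hy hyB
      exact absurd ⟨y, hy, hyB⟩ h1
    | succ k ih =>
      intro y hy hyB
      have hiter : (prv E i κ)^[k + 1] s = prv E i κ ((prv E i κ)^[k] s) :=
        Function.iterate_succ_apply' _ _ _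
      rw [hiter] at hy
      by_cases hp : HasIn E i κ ((prv E i κ)^[k] s)
      · have hspec := prv_spec hp
        have hB : inB i κ (prv E i κ ((prv E i κ)^[k] s)) := by
          rw [← hiter]; exact inB_prv_iter hs (k + 1)
        have : y = (prv E i κ)^[k] s :=
          out_unique hE hκ hy hspec.1 hB hyB (inB_prv_iter hs k)
        exact ⟨k, this.symm⟩
      · rw [prv_eq_self hp] at hy
        exact ih y hy hyB
  have horb : ∀ c : Fin n, Relation.ReflTransGen (Rel E i κ) s c →
      ∃ m : ℕ, (prv E i κ)^[m] s = c := by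
    intro c hc
    induction hc with
    | refl => exact ⟨0, rfl⟩
    | @tail b c hab hbc ih =>
      obtain ⟨k, hk⟩ := ih
      rcases hbc.1 with hbc' | hbc'
      · subst hk
        exact absorb k c hbc' hbc.2.2
      · refine ⟨k + 1, ?_⟩
        rw [Function.iterate_succ_apply', hk]
        exact prv_eq_of_edge hE hκ hbc' hbc.2.1 hbc.2.2
  obtain ⟨m, hm⟩ := horb s' hreach
  clear hreach
  induction m with
  | zero => exact hm
  | succ m ih =>
    have hiter : (prv E i κ)^[m + 1] s = prv E i κ ((prv E i κ)^[m] s) :=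
      Function.iterate_succ_apply' _ _ _
    rw [hiter] at hm
    by_cases hp : HasIn E i κ ((prv E i κ)^[m] s)
    · exfalso
      have hspec := prv_spec hp
      rw [hm] at hspec
      exact h2 ⟨(prv E i κ)^[m] s, hspec.1, inB_prv_iter hs m⟩
    · rw [prv_eq_self hp] at hm
      exact ih hm


lemma tail_count (hE : PCADigraph E) (hκ : Proper E κ) {v₀ : Fin n}
    (hv₀ : inB i κ v₀) (c : ℕ) :
    (E.filter fun e => e.1 ∈ comp E i κ v₀ ∧ e.2 ∈ comp E i κ v₀ ∧ κ e.1 = c).card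
      = ((comp E i κ v₀).filter fun u => κ u = c ∧ HasOut E i κ u).card := by
  refine Finset.card_bij' (fun e _ => e.1) (fun u _ => (u, nxt E i κ u)) ?_ ?_ ?_ ?_
  · intro e he
    rw [Finset.mem_filter] at he ⊢
    obtain ⟨heE, h1, h2, h3⟩ := he
    exact ⟨h1, h3, ⟨e.2, heE, inB_of_mem_comp h2 hv₀⟩⟩
  · intro u hu
    rw [Finset.mem_filter] at hu ⊢
    obtain ⟨huC, hc, hout⟩ := hu
    have hspec := nxt_spec hout
    have hnC : nxt E i κ u ∈ comp E i κ v₀ := by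
      rw [mem_comp] at huC ⊢
      exact huC.tail ⟨Or.inl hspec.1, inB_of_reach huC hv₀, hspec.2⟩
    exact ⟨hspec.1, huC, hnC, hc⟩
  · intro e he
    rw [Finset.mem_filter] at he
    obtain ⟨heE, h1, h2, h3⟩ := he
    have := nxt_eq_of_edge hE hκ heE (inB_of_mem_comp h1 hv₀) (inB_of_mem_comp h2 hv₀)
    exact Prod.ext rfl this
  · intro u hu; rfl

lemma head_count (hE : PCADigraph E) (hκ : Proper E κ) {v₀ : Fin n}
    (hv₀ : inB i κ v₀) (c : ℕ) :
    (E.filter fun e => e.1 ∈ comp E i κ v₀ ∧ e.2 ∈ comp E i κ v₀ ∧ κ e.2 = c).card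
      = ((comp E i κ v₀).filter fun u => κ u = c ∧ HasIn E i κ u).card := by
  refine Finset.card_bij' (fun e _ => e.2) (fun u _ => (prv E i κ u, u)) ?_ ?_ ?_ ?_
  · intro e he
    rw [Finset.mem_filter] at he ⊢
    obtain ⟨heE, h1, h2, h3⟩ := he
    exact ⟨h2, h3, ⟨e.1, heE, inB_of_mem_comp h1 hv₀⟩⟩
  · intro u hu
    rw [Finset.mem_filter] at hu ⊢
    obtain ⟨huC, hc, hin⟩ := hu
    have hspec := prv_spec hin
    have hnC : prv E i κ u ∈ comp E i κ v₀ := by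
      rw [mem_comp] at huC ⊢
      exact huC.tail ⟨Or.inr hspec.1, inB_of_reach huC hv₀, hspec.2⟩
    exact ⟨hspec.1, hnC, huC, hc⟩
  · intro e he
    rw [Finset.mem_filter] at he
    obtain ⟨heE, h1, h2, h3⟩ := he
    have := prv_eq_of_edge hE hκ heE (inB_of_mem_comp h2 hv₀) (inB_of_mem_comp h1 hv₀)
    exact Prod.ext this rfl
  · intro u hu; rfl

lemma key_card (hE : PCADigraph E) (hκ : Proper E κ) {v₀ : Fin n} (hv₀ : inB i κ v₀)
    (hne : ((comp E i κ v₀).filter fun u => κ u = i).card ≠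
      ((comp E i κ v₀).filter fun u => κ u = i + 1).card) :
    (E.filter fun e => e.1 ∈ comp E i κ v₀ ∧ e.2 ∈ comp E i κ v₀ ∧ κ e.1 = i).card
      = (E.filter fun e => e.1 ∈ comp E i κ v₀ ∧ e.2 ∈ comp E i κ v₀ ∧ κ e.1 = i + 1).card := by
  have hCB : ∀ u ∈ comp E i κ v₀, inB i κ u := fun u hu => inB_of_mem_comp hu hv₀
  -- convert tail-colored counts to head-colored counts
  have hconv1 : (E.filter fun e => e.1 ∈ comp E i κ v₀ ∧ e.2 ∈ comp E i κ v₀ ∧ κ e.1 = i)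
      = (E.filter fun e => e.1 ∈ comp E i κ v₀ ∧ e.2 ∈ comp E i κ v₀ ∧ κ e.2 = i + 1) := by
    apply Finset.filter_congr
    intro e he
    constructor
    · rintro ⟨h1, h2, h3⟩
      refine ⟨h1, h2, ?_⟩
      have := hκ e he
      rcases hCB e.2 h2 with h | h <;> omega
    · rintro ⟨h1, h2, h3⟩
      refine ⟨h1, h2, ?_⟩
      have := hκ e he
      rcases hCB e.1 h1 with h | h <;> omega
  have hconv2 : (E.filter fun e => e.1 ∈ comp E i κ v₀ ∧ e.2 ∈ comp E i κ v₀ ∧ κ e.1 = i + 1)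
      = (E.filter fun e => e.1 ∈ comp E i κ v₀ ∧ e.2 ∈ comp E i κ v₀ ∧ κ e.2 = i) := by
    apply Finset.filter_congr
    intro e he
    constructor
    · rintro ⟨h1, h2, h3⟩
      refine ⟨h1, h2, ?_⟩
      have := hκ e he
      rcases hCB e.2 h2 with h | h <;> omega
    · rintro ⟨h1, h2, h3⟩
      refine ⟨h1, h2, ?_⟩
      have := hκ e he
      rcases hCB e.1 h1 with h | h <;> omega
  -- the four fundamental identities
  have hA1 := tail_count hE hκ hv₀ i
  have hD1 := tail_count hE hκ hv₀ (i + 1)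
  have hA2 := head_count hE hκ hv₀ (i + 1)
  have hD2 := head_count hE hκ hv₀ i
  have hc1 : (E.filter fun e => e.1 ∈ comp E i κ v₀ ∧ e.2 ∈ comp E i κ v₀ ∧ κ e.1 = i).card
      = (E.filter fun e => e.1 ∈ comp E i κ v₀ ∧ e.2 ∈ comp E i κ v₀ ∧ κ e.2 = i + 1).card := by
    rw [hconv1]
  have hc2 : (E.filter fun e => e.1 ∈ comp E i κ v₀ ∧ e.2 ∈ comp E i κ v₀ ∧ κ e.1 = i + 1).card
      = (E.filter fun e => e.1 ∈ comp E i κ v₀ ∧ e.2 ∈ comp E i κ v₀ ∧ κ e.2 = i).card := by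
    rw [hconv2]
  -- splits
  have splitO : ∀ c : ℕ,
      ((comp E i κ v₀).filter fun u => κ u = c ∧ HasOut E i κ u).card
        + ((comp E i κ v₀).filter fun u => κ u = c ∧ ¬ HasOut E i κ u).card
        = ((comp E i κ v₀).filter fun u => κ u = c).card := by
    intro c
    rw [← Finset.filter_filter, ← Finset.filter_filter]
    exact Finset.card_filter_add_card_filter_not _
  have splitI : ∀ c : ℕ,
      ((comp E i κ v₀).filter fun u => κ u = c ∧ HasIn E i κ u).card
        + ((comp E i κ v₀).filter fun u => κ u = c ∧ ¬ HasIn E i κ u).card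
        = ((comp E i κ v₀).filter fun u => κ u = c).card := by
    intro c
    rw [← Finset.filter_filter, ← Finset.filter_filter]
    exact Finset.card_filter_add_card_filter_not _
  -- sources partition
  have hSrcSplit : ((comp E i κ v₀).filter fun u => κ u = i ∧ ¬ HasIn E i κ u).card
      + ((comp E i κ v₀).filter fun u => κ u = i + 1 ∧ ¬ HasIn E i κ u).card
      = ((comp E i κ v₀).filter fun u => ¬ HasIn E i κ u).card := by
    have e1 : ((comp E i κ v₀).filter fun u => ¬ HasIn E i κ u).filter (fun u => κ u = i)
        = (comp E i κ v₀).filter fun u => κ u = i ∧ ¬ HasIn E i κ u := by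
      rw [Finset.filter_filter]
      apply Finset.filter_congr
      intro x hx
      tauto
    have e2 : ((comp E i κ v₀).filter fun u => ¬ HasIn E i κ u).filter (fun u => ¬ κ u = i)
        = (comp E i κ v₀).filter fun u => κ u = i + 1 ∧ ¬ HasIn E i κ u := by
      rw [Finset.filter_filter]
      apply Finset.filter_congr
      intro x hx
      have hx' := hCB x hx
      constructor
      · rintro ⟨h1, h2⟩
        exact ⟨by rcases hx' with h | h <;> omega, h1⟩
      · rintro ⟨h1, h2⟩
        exact ⟨h2, by omega⟩
    rw [← e1, ← e2]
    exact Finset.card_filter_add_card_filter_not _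
  have hSnkSplit : ((comp E i κ v₀).filter fun u => κ u = i ∧ ¬ HasOut E i κ u).card
      + ((comp E i κ v₀).filter fun u => κ u = i + 1 ∧ ¬ HasOut E i κ u).card
      = ((comp E i κ v₀).filter fun u => ¬ HasOut E i κ u).card := by
    have e1 : ((comp E i κ v₀).filter fun u => ¬ HasOut E i κ u).filter (fun u => κ u = i)
        = (comp E i κ v₀).filter fun u => κ u = i ∧ ¬ HasOut E i κ u := by
      rw [Finset.filter_filter]
      apply Finset.filter_congr
      intro x hx
      tauto
    have e2 : ((comp E i κ v₀).filter fun u => ¬ HasOut E i κ u).filter (fun u => ¬ κ u = i)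
        = (comp E i κ v₀).filter fun u => κ u = i + 1 ∧ ¬ HasOut E i κ u := by
      rw [Finset.filter_filter]
      apply Finset.filter_congr
      intro x hx
      have hx' := hCB x hx
      constructor
      · rintro ⟨h1, h2⟩
        exact ⟨by rcases hx' with h | h <;> omega, h1⟩
      · rintro ⟨h1, h2⟩
        exact ⟨h2, by omega⟩
    rw [← e1, ← e2]
    exact Finset.card_filter_add_card_filter_not _
  -- at most one source and at most one sink
  have hSrcLe : ((comp E i κ v₀).filter fun u => ¬ HasIn E i κ u).card ≤ 1 := by
    rw [Finset.card_le_one]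
    intro u hu v hv
    rw [Finset.mem_filter] at hu hv
    exact source_unique hE hκ (hCB u hu.1) hu.2 hv.2
      ((reach_symm (mem_comp.1 hu.1)).trans (mem_comp.1 hv.1))
  have hSnkLe : ((comp E i κ v₀).filter fun u => ¬ HasOut E i κ u).card ≤ 1 := by
    rw [Finset.card_le_one]
    intro u hu v hv
    rw [Finset.mem_filter] at hu hv
    exact sink_unique hE hκ (hCB u hu.1) hu.2 hv.2
      ((reach_symm (mem_comp.1 hu.1)).trans (mem_comp.1 hv.1))
  have h1 := splitO i
  have h2 := splitO (i + 1)
  have h3 := splitI i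
  have h4 := splitI (i + 1)
  omega


/-- generic: counts agree if all fibers agree -/
lemma card_eq_of_fiber_card_eq {α β : Type*} [DecidableEq β] (s t : Finset α) (g : α → β)
    (h : ∀ b : β, (s.filter fun x => g x = b).card = (t.filter fun x => g x = b).card) :
    s.card = t.card := by
  rw [Finset.card_eq_sum_card_fiberwise (f := g) (t := (s ∪ t).image g)
        (fun x hx => Finset.mem_image_of_mem g (Finset.mem_union_left _ hx)),
      Finset.card_eq_sum_card_fiberwise (f := g) (t := (s ∪ t).image g)
        (fun x hx => Finset.mem_image_of_mem g (Finset.mem_union_right _ hx))]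
  exact Finset.sum_congr rfl fun b _ => h b

lemma card_filter_split {α : Type*} (s : Finset α) (q P : α → Prop) [DecidablePred q]
    [DecidablePred P] [DecidablePred fun x => q x ∧ P x]
    [DecidablePred fun x => q x ∧ ¬ P x] :
    (s.filter q).card
      = (s.filter fun x => q x ∧ P x).card + (s.filter fun x => q x ∧ ¬ P x).card := by
  classical
  have h1 : s.filter (fun x => q x ∧ P x) = (s.filter q).filter P := by
    ext x; simp only [Finset.mem_filter]; tauto
  have h2 : s.filter (fun x => q x ∧ ¬ P x) = (s.filter q).filter (fun x => ¬ P x) := by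
    ext x; simp only [Finset.mem_filter]; tauto
  rw [h1, h2, Finset.card_filter_add_card_filter_not]

lemma inB_Phi {v : Fin n} : inB i (Phi E i κ) v ↔ inB i κ v := by
  unfold inB Phi
  split_ifs with h h'
  · have hB := h.1
    unfold inB at hB
    omega
  · have hB := h.1
    unfold inB at hB
    omega
  · exact Iff.rfl

lemma Rel_Phi : Rel E i (Phi E i κ) = Rel E i κ := by
  funext u v
  apply propext
  exact and_congr Iff.rfl (and_congr inB_Phi inB_Phi)

lemma comp_Phi (v : Fin n) : comp E i (Phi E i κ) v = comp E i κ v := by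
  unfold comp
  rw [Rel_Phi]

lemma doSwap_congr {u v : Fin n} (hu : u ∈ comp E i κ v) (hv : inB i κ v) :
    doSwap E i κ u ↔ doSwap E i κ v := by
  unfold doSwap
  rw [comp_eq_of_mem hu]
  have h1 : inB i κ u := inB_of_mem_comp hu hv
  exact ⟨fun h => ⟨hv, h.2⟩, fun h => ⟨h1, h.2⟩⟩

lemma Phi_of_doSwap {v : Fin n} (h : doSwap E i κ v) :
    Phi E i κ v = if κ v = i then i + 1 else i := if_pos h

lemma Phi_of_not_doSwap {v : Fin n} (h : ¬ doSwap E i κ v) : Phi E i κ v = κ v := if_neg h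

lemma filter_Phi_swapped_i {v : Fin n} (hv : doSwap E i κ v) :
    ((comp E i κ v).filter fun u => Phi E i κ u = i)
      = (comp E i κ v).filter fun u => κ u = i + 1 := by
  apply Finset.filter_congr
  intro u hu
  have hsw : doSwap E i κ u := (doSwap_congr hu hv.1).2 hv
  have hB : inB i κ u := inB_of_mem_comp hu hv.1
  unfold inB at hB
  rw [Phi_of_doSwap hsw]
  split_ifs with h <;> omega

lemma filter_Phi_swapped_i1 {v : Fin n} (hv : doSwap E i κ v) :
    ((comp E i κ v).filter fun u => Phi E i κ u = i + 1)
      = (comp E i κ v).filter fun u => κ u = i := by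
  apply Finset.filter_congr
  intro u hu
  have hsw : doSwap E i κ u := (doSwap_congr hu hv.1).2 hv
  have hB : inB i κ u := inB_of_mem_comp hu hv.1
  unfold inB at hB
  rw [Phi_of_doSwap hsw]
  split_ifs with h <;> omega

lemma filter_Phi_fixed {v : Fin n} (hvB : inB i κ v) (hv : ¬ doSwap E i κ v) (c : ℕ) :
    ((comp E i κ v).filter fun u => Phi E i κ u = c)
      = (comp E i κ v).filter fun u => κ u = c := by
  apply Finset.filter_congr
  intro u hu
  have hsw : ¬ doSwap E i κ u := fun h => hv ((doSwap_congr hu hvB).1 h)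
  rw [Phi_of_not_doSwap hsw]

lemma doSwap_Phi {v : Fin n} : doSwap E i (Phi E i κ) v ↔ doSwap E i κ v := by
  by_cases hB : inB i κ v
  · by_cases hs : doSwap E i κ v
    · refine ⟨fun _ => hs, fun _ => ?_⟩
      refine ⟨inB_Phi.2 hB, ?_⟩
      rw [comp_Phi, filter_Phi_swapped_i hs, filter_Phi_swapped_i1 hs]
      exact Ne.symm hs.2
    · constructor
      · intro h
        exfalso
        apply hs
        refine ⟨hB, ?_⟩
        have h2 := h.2
        rw [comp_Phi, filter_Phi_fixed hB hs, filter_Phi_fixed hB hs] at h2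
        exact h2
      · intro h
        exact absurd h hs
  · constructor
    · intro h
      exact absurd (inB_Phi.1 h.1) hB
    · intro h
      exact absurd h.1 hB

lemma Phi_Phi : Phi E i (Phi E i κ) = κ := by
  funext v
  by_cases hs : doSwap E i κ v
  · have hs' : doSwap E i (Phi E i κ) v := doSwap_Phi.2 hs
    have h2 : Phi E i (Phi E i κ) v
        = if Phi E i κ v = i then i + 1 else i := if_pos hs'
    rw [h2, Phi_of_doSwap hs]
    have hB := hs.1
    unfold inB at hB
    split_ifs <;> omega
  · have hs' : ¬ doSwap E i (Phi E i κ) v := fun h => hs (doSwap_Phi.1 h)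
    rw [Phi_of_not_doSwap hs', Phi_of_not_doSwap hs]

lemma not_inB_of_adj_not_doSwap (hκ : Proper E κ) {u v : Fin n}
    (hadj : UAdj E u v) (hu : doSwap E i κ u) (hv : ¬ doSwap E i κ v) : ¬ inB i κ v := by
  intro hvB
  apply hv
  have : v ∈ comp E i κ u :=
    mem_comp.2 (Relation.ReflTransGen.single ⟨hadj, hu.1, hvB⟩)
  exact (doSwap_congr this hu.1).2 hu

lemma Proper_Phi (hE : PCADigraph E) (hκ : Proper E κ) : Proper E (Phi E i κ) := by
  intro e he
  have hne := hκ e he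
  have hadj : UAdj E e.1 e.2 := Or.inl (by rw [Prod.mk.eta]; exact he)
  by_cases h1 : doSwap E i κ e.1 <;> by_cases h2 : doSwap E i κ e.2
  · have b1 := h1.1
    have b2 := h2.1
    unfold inB at b1 b2
    rw [Phi_of_doSwap h1, Phi_of_doSwap h2]
    split_ifs <;> omega
  · have hB2 := not_inB_of_adj_not_doSwap hκ hadj h1 h2
    unfold inB at hB2
    have b1 := h1.1
    unfold inB at b1
    rw [Phi_of_doSwap h1, Phi_of_not_doSwap h2]
    split_ifs <;> omega
  · have hadj' : UAdj E e.2 e.1 := Or.symm hadj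
    have hB1 := not_inB_of_adj_not_doSwap hκ hadj' h2 h1
    unfold inB at hB1
    have b2 := h2.1
    unfold inB at b2
    rw [Phi_of_not_doSwap h1, Phi_of_doSwap h2]
    split_ifs <;> omega
  · rw [Phi_of_not_doSwap h1, Phi_of_not_doSwap h2]
    exact hne


lemma asc_Phi (hE : PCADigraph E) (hκ : Proper E κ) : asc E (Phi E i κ) = asc E κ := by
  classical
  set P : Fin n × Fin n → Prop := fun e => doSwap E i κ e.1 ∧ doSwap E i κ e.2 with hP
  -- edges not inside a swapped component keep their ascent status
  have core : ∀ e ∈ E, ¬ P e → (Phi E i κ e.1 < Phi E i κ e.2 ↔ κ e.1 < κ e.2) := by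
    intro e he hnP
    have hadj : UAdj E e.1 e.2 := Or.inl (by rw [Prod.mk.eta]; exact he)
    by_cases h1 : doSwap E i κ e.1 <;> by_cases h2 : doSwap E i κ e.2
    · exact absurd ⟨h1, h2⟩ hnP
    · have hB2 := not_inB_of_adj_not_doSwap hκ hadj h1 h2
      unfold inB at hB2
      have b1 := h1.1
      unfold inB at b1
      rw [Phi_of_doSwap h1, Phi_of_not_doSwap h2]
      split_ifs <;> omega
    · have hadj' : UAdj E e.2 e.1 := Or.symm hadj
      have hB1 := not_inB_of_adj_not_doSwap hκ hadj' h2 h1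
      unfold inB at hB1
      have b2 := h2.1
      unfold inB at b2
      rw [Phi_of_not_doSwap h1, Phi_of_doSwap h2]
      split_ifs <;> omega
    · rw [Phi_of_not_doSwap h1, Phi_of_not_doSwap h2]
  -- edges inside a swapped component flip their ascent status
  have flip : ∀ e ∈ E, P e → (Phi E i κ e.1 < Phi E i κ e.2 ↔ κ e.2 < κ e.1) := by
    intro e he hPe
    have hne := hκ e he
    have b1 := hPe.1.1
    have b2 := hPe.2.1
    unfold inB at b1 b2
    rw [Phi_of_doSwap hPe.1, Phi_of_doSwap hPe.2]
    split_ifs <;> omega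
  have r1 : (E.filter fun e => (Phi E i κ e.1 < Phi E i κ e.2) ∧ P e)
      = E.filter fun e => (κ e.2 < κ e.1) ∧ P e := by
    apply Finset.filter_congr
    intro e he
    exact and_congr_left fun hPe => flip e he hPe
  have r2 : (E.filter fun e => (Phi E i κ e.1 < Phi E i κ e.2) ∧ ¬ P e)
      = E.filter fun e => (κ e.1 < κ e.2) ∧ ¬ P e := by
    apply Finset.filter_congr
    intro e he
    exact and_congr_left fun hnP => core e he hnP
  -- within swapped components, descents and ascents are equinumerous
  have hfib : (E.filter fun e => (κ e.2 < κ e.1) ∧ P e).card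
      = (E.filter fun e => (κ e.1 < κ e.2) ∧ P e).card := by
    apply card_eq_of_fiber_card_eq _ _ (fun e => comp E i κ e.1)
    intro b
    by_cases hb : ∃ v, doSwap E i κ v ∧ comp E i κ v = b
    · obtain ⟨v, hv, rfl⟩ := hb
      have e1 : ((E.filter fun e => (κ e.2 < κ e.1) ∧ P e).filter
            fun e => comp E i κ e.1 = comp E i κ v)
          = E.filter fun e => e.1 ∈ comp E i κ v ∧ e.2 ∈ comp E i κ v ∧ κ e.1 = i + 1 := by
        rw [Finset.filter_filter]
        apply Finset.filter_congr
        intro e he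
        constructor
        · rintro ⟨⟨hlt, hPe⟩, hcomp⟩
          have hadj : UAdj E e.1 e.2 := Or.inl (by rw [Prod.mk.eta]; exact he)
          have h1 : e.1 ∈ comp E i κ v := by rw [← hcomp]; exact mem_comp_self e.1
          have h2 : e.2 ∈ comp E i κ v := by
            rw [← hcomp]
            exact mem_comp.2 (Relation.ReflTransGen.single ⟨hadj, hPe.1.1, hPe.2.1⟩)
          have b1 := hPe.1.1
          have b2 := hPe.2.1
          unfold inB at b1 b2
          exact ⟨h1, h2, by omega⟩
        · rintro ⟨h1, h2, h3⟩
          have b2 : inB i κ e.2 := inB_of_mem_comp h2 hv.1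
          have hne := hκ e he
          have hsw1 : doSwap E i κ e.1 := (doSwap_congr h1 hv.1).2 hv
          have hsw2 : doSwap E i κ e.2 := (doSwap_congr h2 hv.1).2 hv
          unfold inB at b2
          exact ⟨⟨by omega, hsw1, hsw2⟩, comp_eq_of_mem h1⟩
      have e2 : ((E.filter fun e => (κ e.1 < κ e.2) ∧ P e).filter
            fun e => comp E i κ e.1 = comp E i κ v)
          = E.filter fun e => e.1 ∈ comp E i κ v ∧ e.2 ∈ comp E i κ v ∧ κ e.1 = i := by
        rw [Finset.filter_filter]
        apply Finset.filter_congr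
        intro e he
        constructor
        · rintro ⟨⟨hlt, hPe⟩, hcomp⟩
          have hadj : UAdj E e.1 e.2 := Or.inl (by rw [Prod.mk.eta]; exact he)
          have h1 : e.1 ∈ comp E i κ v := by rw [← hcomp]; exact mem_comp_self e.1
          have h2 : e.2 ∈ comp E i κ v := by
            rw [← hcomp]
            exact mem_comp.2 (Relation.ReflTransGen.single ⟨hadj, hPe.1.1, hPe.2.1⟩)
          have b1 := hPe.1.1
          have b2 := hPe.2.1
          unfold inB at b1 b2
          exact ⟨h1, h2, by omega⟩
        · rintro ⟨h1, h2, h3⟩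
          have b2 : inB i κ e.2 := inB_of_mem_comp h2 hv.1
          have hne := hκ e he
          have hsw1 : doSwap E i κ e.1 := (doSwap_congr h1 hv.1).2 hv
          have hsw2 : doSwap E i κ e.2 := (doSwap_congr h2 hv.1).2 hv
          unfold inB at b2
          exact ⟨⟨by omega, hsw1, hsw2⟩, comp_eq_of_mem h1⟩
      rw [e1, e2]
      exact (key_card hE hκ hv.1 hv.2).symm
    · have he1 : ((E.filter fun e => (κ e.2 < κ e.1) ∧ P e).filter
            fun e => comp E i κ e.1 = b) = ∅ := by
        rw [Finset.eq_empty_iff_forall_notMem]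
        intro e he
        simp only [Finset.mem_filter] at he
        exact hb ⟨e.1, he.1.2.2.1, he.2⟩
      have he2 : ((E.filter fun e => (κ e.1 < κ e.2) ∧ P e).filter
            fun e => comp E i κ e.1 = b) = ∅ := by
        rw [Finset.eq_empty_iff_forall_notMem]
        intro e he
        simp only [Finset.mem_filter] at he
        exact hb ⟨e.1, he.1.2.2.1, he.2⟩
      rw [he1, he2]
  unfold asc
  rw [card_filter_split E (fun e => Phi E i κ e.1 < Phi E i κ e.2) P,
    card_filter_split E (fun e => κ e.1 < κ e.2) P, r1, r2, hfib]

lemma content_apply (κ : Fin n → ℕ) (c : ℕ) :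
    content n κ c = (Finset.univ.filter fun v : Fin n => κ v = c).card := by
  classical
  unfold content
  rw [Finsupp.finset_sum_apply, Finset.card_filter]
  exact Finset.sum_congr rfl fun v _ => Finsupp.single_apply

lemma unswapped_balance :
    (Finset.univ.filter fun v : Fin n => κ v = i ∧ ¬ doSwap E i κ v).card
      = (Finset.univ.filter fun v : Fin n => κ v = i + 1 ∧ ¬ doSwap E i κ v).card := by
  apply card_eq_of_fiber_card_eq _ _ (comp E i κ)
  intro b
  by_cases hb : ∃ v, inB i κ v ∧ ¬ doSwap E i κ v ∧ comp E i κ v = b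
  · obtain ⟨v, hvB, hvs, rfl⟩ := hb
    have e1 : ((Finset.univ.filter fun u : Fin n => κ u = i ∧ ¬ doSwap E i κ u).filter
          fun u => comp E i κ u = comp E i κ v)
        = (comp E i κ v).filter fun u => κ u = i := by
      rw [Finset.filter_filter]
      ext u
      simp only [Finset.mem_filter, Finset.mem_univ, true_and]
      constructor
      · rintro ⟨⟨h1, h2⟩, h3⟩
        exact ⟨by rw [← h3]; exact mem_comp_self u, h1⟩
      · rintro ⟨h1, h2⟩
        have hds : ¬ doSwap E i κ u := fun hs => hvs ((doSwap_congr h1 hvB).1 hs)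
        exact ⟨⟨h2, hds⟩, comp_eq_of_mem h1⟩
    have e2 : ((Finset.univ.filter fun u : Fin n => κ u = i + 1 ∧ ¬ doSwap E i κ u).filter
          fun u => comp E i κ u = comp E i κ v)
        = (comp E i κ v).filter fun u => κ u = i + 1 := by
      rw [Finset.filter_filter]
      ext u
      simp only [Finset.mem_filter, Finset.mem_univ, true_and]
      constructor
      · rintro ⟨⟨h1, h2⟩, h3⟩
        exact ⟨by rw [← h3]; exact mem_comp_self u, h1⟩
      · rintro ⟨h1, h2⟩
        have hds : ¬ doSwap E i κ u := fun hs => hvs ((doSwap_congr h1 hvB).1 hs)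
        exact ⟨⟨h2, hds⟩, comp_eq_of_mem h1⟩
    rw [e1, e2]
    by_contra hcon
    exact hvs ⟨hvB, hcon⟩
  · have he1 : ((Finset.univ.filter fun u : Fin n => κ u = i ∧ ¬ doSwap E i κ u).filter
        fun u => comp E i κ u = b) = ∅ := by
      rw [Finset.eq_empty_iff_forall_notMem]
      intro u hu
      simp only [Finset.mem_filter, Finset.mem_univ, true_and] at hu
      exact hb ⟨u, Or.inl hu.1.1, hu.1.2, hu.2⟩
    have he2 : ((Finset.univ.filter fun u : Fin n => κ u = i + 1 ∧ ¬ doSwap E i κ u).filter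
        fun u => comp E i κ u = b) = ∅ := by
      rw [Finset.eq_empty_iff_forall_notMem]
      intro u hu
      simp only [Finset.mem_filter, Finset.mem_univ, true_and] at hu
      exact hb ⟨u, Or.inr hu.1.1, hu.1.2, hu.2⟩
    rw [he1, he2]

lemma content_Phi : content n (Phi E i κ) = Finsupp.equivMapDomain (Equiv.swap i (i + 1)) (content n κ) := by
  ext c
  rw [Finsupp.equivMapDomain_apply, Equiv.symm_swap, content_apply, content_apply]
  by_cases hc : c = i
  · rw [hc]
    rw [Equiv.swap_apply_left]
    rw [card_filter_split Finset.univ (fun v => Phi E i κ v = i) (doSwap E i κ),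
      card_filter_split Finset.univ (fun v => κ v = i + 1) (doSwap E i κ)]
    have r1 : (Finset.univ.filter fun v : Fin n => Phi E i κ v = i ∧ doSwap E i κ v)
        = Finset.univ.filter fun v => κ v = i + 1 ∧ doSwap E i κ v := by
      apply Finset.filter_congr
      intro v _
      constructor
      · rintro ⟨h1, h2⟩
        have hB := h2.1
        unfold inB at hB
        rw [Phi_of_doSwap h2] at h1
        refine ⟨?_, h2⟩
        split_ifs at h1 <;> omega
      · rintro ⟨h1, h2⟩
        have hB := h2.1
        unfold inB at hB
        rw [Phi_of_doSwap h2]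
        refine ⟨?_, h2⟩
        split_ifs <;> omega
    have r2 : (Finset.univ.filter fun v : Fin n => Phi E i κ v = i ∧ ¬ doSwap E i κ v)
        = Finset.univ.filter fun v => κ v = i ∧ ¬ doSwap E i κ v := by
      apply Finset.filter_congr
      intro v _
      constructor
      · rintro ⟨h1, h2⟩
        rw [Phi_of_not_doSwap h2] at h1
        exact ⟨h1, h2⟩
      · rintro ⟨h1, h2⟩
        rw [Phi_of_not_doSwap h2]
        exact ⟨h1, h2⟩
    rw [r1, r2]
    have hfib := unswapped_balance (E := E) (i := i) (κ := κ)
    omega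
  · by_cases hc' : c = i + 1
    · subst hc'
      rw [Equiv.swap_apply_right]
      rw [card_filter_split Finset.univ (fun v => Phi E i κ v = i + 1) (doSwap E i κ),
        card_filter_split Finset.univ (fun v : Fin n => κ v = i) (doSwap E i κ)]
      have r1 : (Finset.univ.filter fun v : Fin n => Phi E i κ v = i + 1 ∧ doSwap E i κ v)
          = Finset.univ.filter fun v => κ v = i ∧ doSwap E i κ v := by
        apply Finset.filter_congr
        intro v _
        constructor
        · rintro ⟨h1, h2⟩
          have hB := h2.1
          unfold inB at hB
          rw [Phi_of_doSwap h2] at h1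
          refine ⟨?_, h2⟩
          split_ifs at h1 <;> omega
        · rintro ⟨h1, h2⟩
          rw [Phi_of_doSwap h2]
          exact ⟨by rw [if_pos h1], h2⟩
      have r2 : (Finset.univ.filter fun v : Fin n => Phi E i κ v = i + 1 ∧ ¬ doSwap E i κ v)
          = Finset.univ.filter fun v => κ v = i + 1 ∧ ¬ doSwap E i κ v := by
        apply Finset.filter_congr
        intro v _
        constructor
        · rintro ⟨h1, h2⟩
          rw [Phi_of_not_doSwap h2] at h1
          exact ⟨h1, h2⟩
        · rintro ⟨h1, h2⟩
          rw [Phi_of_not_doSwap h2]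
          exact ⟨h1, h2⟩
      rw [r1, r2]
      have hfib := unswapped_balance (E := E) (i := i) (κ := κ)
      omega
    · rw [Equiv.swap_apply_of_ne_of_ne hc hc']
      apply congrArg
      apply Finset.filter_congr
      intro v _
      by_cases h : doSwap E i κ v
      · have hB := h.1
        unfold inB at hB
        rw [Phi_of_doSwap h]
        split_ifs <;> omega
      · rw [Phi_of_not_doSwap h]


lemma swap_invol (i : ℕ) (d' : ℕ →₀ ℕ) :
    Finsupp.equivMapDomain (Equiv.swap i (i + 1))
      (Finsupp.equivMapDomain (Equiv.swap i (i + 1)) d') = d' := by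
  rw [← Finsupp.equivMapDomain_trans, Equiv.swap_swap, Finsupp.equivMapDomain_refl]

lemma X_swap (hE : PCADigraph E) (i : ℕ) (d : ℕ →₀ ℕ) :
    X n E (Finsupp.equivMapDomain (Equiv.swap i (i + 1)) d) = X n E d := by
  have hbij : Set.BijOn (fun κ => Phi E i κ)
      {κ | Proper E κ ∧ content n κ = Finsupp.equivMapDomain (Equiv.swap i (i + 1)) d}
      {κ | Proper E κ ∧ content n κ = d} := by
    refine ⟨?_, ?_, ?_⟩
    · intro κ hκ
      refine ⟨Proper_Phi hE hκ.1, ?_⟩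
      rw [content_Phi, hκ.2, swap_invol]
    · intro a _ b _ hab
      have : Phi E i (Phi E i a) = Phi E i (Phi E i b) := congrArg (Phi E i) hab
      rwa [Phi_Phi, Phi_Phi] at this
    · intro κ hκ
      refine ⟨Phi E i κ, ⟨Proper_Phi hE hκ.1, ?_⟩, Phi_Phi⟩
      rw [content_Phi, hκ.2]
  have hval : ∀ κ ∈ {κ | Proper E κ ∧
      content n κ = Finsupp.equivMapDomain (Equiv.swap i (i + 1)) d},
      (Polynomial.X : Polynomial ℚ) ^ asc E κ
        = (Polynomial.X : Polynomial ℚ) ^ asc E (Phi E i κ) := by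
    intro κ hκ
    rw [asc_Phi hE hκ.1]
  exact finsum_mem_eq_of_bijOn (fun κ => Phi E i κ) hbij hval

lemma X_swap_le (hE : PCADigraph E) :
    ∀ (k a : ℕ) (d : ℕ →₀ ℕ),
      X n E (Finsupp.equivMapDomain (Equiv.swap a (a + k)) d) = X n E d := by
  intro k
  induction k with
  | zero =>
    intro a d
    rw [show Equiv.swap a (a + 0) = Equiv.refl ℕ from Equiv.swap_self a,
      Finsupp.equivMapDomain_refl]
  | succ k ih =>
    intro a d
    by_cases hk : k = 0
    · subst hk
      exact X_swap hE a d
    · have hdec : Equiv.swap a (a + (k + 1))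
          = (Equiv.swap (a + k) (a + k + 1)).trans
              ((Equiv.swap a (a + k)).trans (Equiv.swap (a + k) (a + k + 1))) := by
        ext y
        simp only [Equiv.trans_apply, Equiv.swap_apply_def]
        split_ifs <;> omega
      rw [hdec, Finsupp.equivMapDomain_trans, Finsupp.equivMapDomain_trans]
      rw [X_swap hE (a + k), ih a, X_swap hE (a + k)]

lemma X_swap_all (hE : PCADigraph E) (a b : ℕ) (d : ℕ →₀ ℕ) :
    X n E (Finsupp.equivMapDomain (Equiv.swap a b) d) = X n E d := by
  rcases le_total a b with h | h
  · obtain ⟨k, rfl⟩ := Nat.exists_eq_add_of_le h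
    exact X_swap_le hE k a d
  · obtain ⟨k, rfl⟩ := Nat.exists_eq_add_of_le h
    rw [Equiv.swap_comm]
    exact X_swap_le hE k b d

lemma emD_eq_self {d : ℕ →₀ ℕ} {π : Equiv.Perm ℕ}
    (h : ∀ x ∈ d.support, π x = x) : Finsupp.equivMapDomain π d = d := by
  ext y
  rw [Finsupp.equivMapDomain_apply]
  by_cases hy : π.symm y ∈ d.support
  · have h1 := h _ hy
    rw [Equiv.apply_symm_apply] at h1
    rw [h1.symm]
  · rw [Finsupp.notMem_support_iff.1 hy]
    by_cases hy2 : y ∈ d.support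
    · exfalso
      apply hy
      have h2 : π.symm y = y := (Equiv.symm_apply_eq π).2 (h _ hy2).symm
      rw [h2]
      exact hy2
    · exact (Finsupp.notMem_support_iff.1 hy2).symm

lemma X_perm_aux (hE : PCADigraph E) :
    ∀ (k : ℕ) (d : ℕ →₀ ℕ) (π : Equiv.Perm ℕ),
      (d.support.filter fun x => π x ≠ x).card ≤ k →
      X n E (Finsupp.equivMapDomain π d) = X n E d := by
  intro k
  induction k with
  | zero =>
    intro d π h
    have h0 : ∀ x ∈ d.support, π x = x := by
      intro x hx
      by_contra hne
      have hmem : x ∈ d.support.filter fun x => π x ≠ x := Finset.mem_filter.2 ⟨hx, hne⟩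
      have := Finset.card_pos.2 ⟨x, hmem⟩
      omega
    rw [emD_eq_self h0]
  | succ k ih =>
    intro d π h
    by_cases h0 : (d.support.filter fun x => π x ≠ x).card = 0
    · have h0' : ∀ x ∈ d.support, π x = x := by
        intro x hx
        by_contra hne
        have hmem : x ∈ d.support.filter fun x => π x ≠ x := Finset.mem_filter.2 ⟨hx, hne⟩
        have := Finset.card_pos.2 ⟨x, hmem⟩
        omega
      rw [emD_eq_self h0']
    · obtain ⟨x, hxmem⟩ := Finset.card_pos.1 (Nat.pos_of_ne_zero h0)
      rw [Finset.mem_filter] at hxmem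
      obtain ⟨hx1, hx2⟩ := hxmem
      set u := π x with hu
      set τ := Equiv.swap x u with hτ
      set σ := τ.trans π with hσ
      have hπ : π = τ.trans σ := by
        ext y
        simp only [hσ, hτ, Equiv.trans_apply, Equiv.swap_apply_self]
      have hσu : σ u = u := by
        rw [hσ, hτ]
        simp only [Equiv.trans_apply, Equiv.swap_apply_right]
        exact hu.symm
      have hσy : ∀ y, y ≠ x → y ≠ u → σ y = π y := by
        intro y h1 h2
        rw [hσ, hτ]
        simp only [Equiv.trans_apply, Equiv.swap_apply_of_ne_of_ne h1 h2]
      have hsupp : ∀ y, y ∈ (Finsupp.equivMapDomain τ d).support ↔ τ y ∈ d.support := by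
        intro y
        rw [Finsupp.mem_support_iff, Finsupp.mem_support_iff,
          Finsupp.equivMapDomain_apply, hτ, Equiv.symm_swap]
      have hxD : x ∈ d.support.filter fun y => π y ≠ y := Finset.mem_filter.2 ⟨hx1, hx2⟩
      have hxu : x ≠ u := fun hequ => hx2 (by rw [← hequ] at hu; exact hu.symm)
      have hmeas : ((Finsupp.equivMapDomain τ d).support.filter fun y => σ y ≠ y).card ≤ k := by
        by_cases hud : u ∈ d.support
        · have hπu : π u ≠ u := by
            intro hequ
            exact hxu (π.injective (hu.symm.trans hequ.symm))
          have huD : u ∈ d.support.filter fun y => π y ≠ y := Finset.mem_filter.2 ⟨hud, hπu⟩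
          have hsub : ((Finsupp.equivMapDomain τ d).support.filter fun y => σ y ≠ y)
              ⊆ insert x (((d.support.filter fun y => π y ≠ y).erase x).erase u) := by
            intro y hy
            rw [Finset.mem_filter] at hy
            obtain ⟨hy1, hy2⟩ := hy
            by_cases hyx : y = x
            · subst hyx; exact Finset.mem_insert_self _ _
            · by_cases hyu : y = u
              · subst hyu; exact absurd hσu hy2
              · refine Finset.mem_insert_of_mem (Finset.mem_erase.2 ⟨hyu,
                  Finset.mem_erase.2 ⟨hyx, Finset.mem_filter.2 ⟨?_, ?_⟩⟩⟩)
                · have := (hsupp y).1 hy1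
                  rwa [hτ, Equiv.swap_apply_of_ne_of_ne hyx hyu] at this
                · rw [← hσy y hyx hyu]; exact hy2
          have hcard := Finset.card_le_card hsub
          have hc1 := Finset.card_insert_le x (((d.support.filter fun y => π y ≠ y).erase x).erase u)
          have hc2 := Finset.card_erase_of_mem (Finset.mem_erase.2 ⟨(Ne.symm hxu), huD⟩)
          have hc3 := Finset.card_erase_of_mem hxD
          have hpos : 2 ≤ (d.support.filter fun y => π y ≠ y).card := by
            have := Finset.one_lt_card.2 ⟨x, hxD, u, huD, hxu⟩
            omega
          omega
        · have hsub : ((Finsupp.equivMapDomain τ d).support.filter fun y => σ y ≠ y)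
              ⊆ (d.support.filter fun y => π y ≠ y).erase x := by
            intro y hy
            rw [Finset.mem_filter] at hy
            obtain ⟨hy1, hy2⟩ := hy
            by_cases hyx : y = x
            · subst hyx
              exfalso
              apply hud
              have := (hsupp y).1 hy1
              rwa [hτ, Equiv.swap_apply_left] at this
            · by_cases hyu : y = u
              · subst hyu; exact absurd hσu hy2
              · refine Finset.mem_erase.2 ⟨hyx, Finset.mem_filter.2 ⟨?_, ?_⟩⟩
                · have := (hsupp y).1 hy1
                  rwa [hτ, Equiv.swap_apply_of_ne_of_ne hyx hyu] at this
                · rw [← hσy y hyx hyu]; exact hy2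
          have hcard := Finset.card_le_card hsub
          have hc3 := Finset.card_erase_of_mem hxD
          have hpos : 1 ≤ (d.support.filter fun y => π y ≠ y).card :=
            Finset.card_pos.2 ⟨x, hxD⟩
          omega
      calc X n E (Finsupp.equivMapDomain π d)
          = X n E (Finsupp.equivMapDomain σ (Finsupp.equivMapDomain τ d)) := by
            rw [← Finsupp.equivMapDomain_trans, ← hπ]
        _ = X n E (Finsupp.equivMapDomain τ d) := ih _ σ hmeas
        _ = X n E d := by rw [hτ]; exact X_swap_all hE x u d

lemma X_perm (hE : PCADigraph E) (d : ℕ →₀ ℕ) (π : Equiv.Perm ℕ) :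
    X n E (Finsupp.equivMapDomain π d) = X n E d :=
  X_perm_aux hE _ d π le_rfl

end Aux

/-- the chromatic quasisymmetric function of a proper circular arc digraph
has symmetric coefficients: for each `j`, the coefficient of `t^j` is a symmetric
function. -/
theorem pca_symmetric (n : ℕ) (E : Finset (Fin n × Fin n)) (hE : PCADigraph E) :
    ∀ (π : Equiv.Perm ℕ) (j : ℕ) (d : ℕ →₀ ℕ),
      (MvPowerSeries.coeff (Finsupp.equivMapDomain π d) (X n E)).coeff j =
        (MvPowerSeries.coeff d (X n E)).coeff j := by
  intro π j d
  rw [MvPowerSeries.coeff_apply, MvPowerSeries.coeff_apply, X_perm hE d π]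

end CQSF
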